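/- Let d ≥ 4 and let h: ℝ^{2d} \ {0} → ℝ be homogeneous of degree −3, i.e. h(rθ) = r⁻³ h̄(θ) for r > 0 and θ on the unit sphere, where h̄ ≥ 0 is measurable. Suppose there is a closed subset Σ of the unit sphere of codimension ≥ 4 and a constant C with h̄(θ) ≤ C·dist(θ,Σ)⁻² for all θ ∉ Σ. Then h̄ is integrable on the unit sphere, and lim_{R→∞} R^{3−d'} ∫_{B(0,R)} h = (1/(d'−3)) ∫_{S} h̄, where d' = 2d is the real dimension (assuming d' > 3). -/

import Mathlib

open Metric MeasureTheory Filter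
open scoped ENNReal

/-- Integrability and asymptotics for a homogeneous function of degree `−3` on `ℝ^{2d}`
whose restriction `h̄` to the unit sphere is bounded by `dist(·,Sigma)⁻²` near a closed set
`Sigma` of codimension `≥ 4` (encoded by the tube volume bound `μ_S({dist < ε}) ≤ c ε⁴`):
`h̄` is integrable on the sphere and
`lim_{R→∞} R^{3−d'} ∫_{B(0,R)} h = (1/(d'−3)) ∫_S h̄`, where `d' = 2d`. -/
theorem stmt_10 (d : ℕ) (hd : 4 ≤ d)
    (h : EuclideanSpace ℝ (Fin (2 * d)) → ℝ)
    (hbar : Metric.sphere (0 : EuclideanSpace ℝ (Fin (2 * d))) 1 → ℝ)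
    (hbar_nonneg : ∀ θ, 0 ≤ hbar θ) (hbar_meas : Measurable hbar)
    -- h is homogeneous of degree −3 with spherical part h̄:
    (hhom : ∀ (r : ℝ), 0 < r →
      ∀ θ : Metric.sphere (0 : EuclideanSpace ℝ (Fin (2 * d))) 1,
        h (r • (θ : EuclideanSpace ℝ (Fin (2 * d)))) = (r ^ 3)⁻¹ * hbar θ)
    (Sig : Set (Metric.sphere (0 : EuclideanSpace ℝ (Fin (2 * d))) 1))
    (hSigmaclosed : IsClosed Sig)
    -- Sigma has codimension ≥ 4 in the sphere: tube volume bound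
    (c : ℝ) (hc : 0 < c)
    (htube : ∀ ε : ℝ, 0 < ε → ε ≤ 1 →
      volume.toSphere {θ : Metric.sphere (0 : EuclideanSpace ℝ (Fin (2 * d))) 1 |
          Metric.infDist (θ : EuclideanSpace ℝ (Fin (2 * d)))
            ((↑) '' Sig : Set (EuclideanSpace ℝ (Fin (2 * d)))) < ε}
        ≤ ENNReal.ofReal (c * ε ^ 4))
    -- h̄ is bounded by dist(·,Sigma)⁻² off Sigma:
    (hbound : ∀ θ, θ ∉ Sig → hbar θ ≤ c / (Metric.infDist (θ : EuclideanSpace ℝ (Fin (2 * d)))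
        ((↑) '' Sig : Set (EuclideanSpace ℝ (Fin (2 * d)))) ^ 2)) :
    Integrable hbar volume.toSphere ∧
    Tendsto (fun R : ℝ => R ^ (3 - (2 * d : ℝ)) * ∫ x in ball (0 : EuclideanSpace ℝ (Fin (2 * d))) R, h x)
      atTop (nhds ((1 / ((2 * d : ℝ) - 3)) * ∫ θ, hbar θ ∂volume.toSphere)) := by
  classical
  have hd8 : 8 ≤ 2 * d := by omega
  haveI : Nonempty (Fin (2 * d)) := ⟨⟨0, by omega⟩⟩
  haveI : Nontrivial (EuclideanSpace ℝ (Fin (2 * d))) := inferInstance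
  have hdim : Module.finrank ℝ (EuclideanSpace ℝ (Fin (2 * d))) = 2 * d := finrank_euclideanSpace_fin
  set μS := (volume : Measure (EuclideanSpace ℝ (Fin (2 * d)))).toSphere with hμS
  set g : sphere (0 : (EuclideanSpace ℝ (Fin (2 * d)))) 1 → ℝ := fun θ => infDist (θ : (EuclideanSpace ℝ (Fin (2 * d)))) ((↑) '' Sig) with hg
  have hgm : Measurable g :=
    ((continuous_infDist_pt _).comp continuous_subtype_val).measurable
  have hgnn : ∀ θ, 0 ≤ g θ := fun θ => infDist_nonneg
  -- Sigma is null
  have hSigLe : ∀ ε : ℝ, 0 < ε → ε ≤ 1 → μS Sig ≤ ENNReal.ofReal (c * ε ^ 4) := by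
    intro ε hε hε1
    refine (measure_mono ?_).trans (htube ε hε hε1)
    intro θ hθ
    have h0 : infDist (θ : (EuclideanSpace ℝ (Fin (2 * d)))) (Subtype.val '' Sig) = 0 :=
      infDist_zero_of_mem (Set.mem_image_of_mem _ hθ)
    simpa [Set.mem_setOf_eq, h0] using hε
  have hSigNull : μS Sig = 0 := by
    refine le_antisymm ?_ (zero_le)
    have hl : Tendsto (fun ε : ℝ => ENNReal.ofReal (c * ε ^ 4)) (nhdsWithin 0 (Set.Ioi 0)) (nhds 0) := by
      have h1 : Tendsto (fun ε : ℝ => c * ε ^ 4) (nhds 0) (nhds 0) := by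
        simpa using (Continuous.tendsto' (f := fun ε : ℝ => c * ε ^ 4) (continuous_const.mul (continuous_pow 4)) 0 0 (by simp))
      simpa [Function.comp_def] using (ENNReal.continuous_ofReal.tendsto 0).comp (h1.mono_left nhdsWithin_le_nhds)
    refine ge_of_tendsto hl ?_
    filter_upwards [Ioo_mem_nhdsGT_of_mem ⟨le_rfl, one_pos⟩] with ε hε
    exact hSigLe ε hε.1 hε.2.le
  -- finiteness of the dominating integral
  have hdom : ∫⁻ θ, ENNReal.ofReal (c / g θ ^ 2) ∂μS < ⊤ := by
    rw [lintegral_eq_lintegral_meas_lt μS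
      (Filter.Eventually.of_forall fun θ => div_nonneg hc.le (sq_nonneg _))
      ((measurable_const.div (hgm.pow_const 2)).aemeasurable)]
    rw [← Set.Ioc_union_Ioi_eq_Ioi hc.le,
      lintegral_union measurableSet_Ioi (Set.Ioc_disjoint_Ioi le_rfl)]
    have hfin1 : ∫⁻ t in Set.Ioc (0:ℝ) c, μS {a | t < c / g a ^ 2} < ⊤ := by
      refine lt_of_le_of_lt (setLIntegral_mono measurable_const fun t _ => measure_mono (Set.subset_univ _)) ?_
      rw [setLIntegral_const]
      exact ENNReal.mul_lt_top (measure_lt_top _ _) (by simp [Real.volume_Ioc])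
    have hfin2 : ∫⁻ t in Set.Ioi c, μS {a | t < c / g a ^ 2} < ⊤ := by
      have hb : ∀ t ∈ Set.Ioi c, μS {a | t < c / g a ^ 2} ≤ ENNReal.ofReal (c ^ 3 / t ^ 2) := by
        intro t ht
        have htpos : 0 < t := hc.trans ht
        have hct : 0 ≤ c / t := div_nonneg hc.le htpos.le
        have hsub : {a | t < c / g a ^ 2} ⊆
            {θ : sphere (0:(EuclideanSpace ℝ (Fin (2 * d)))) 1 | infDist (θ : (EuclideanSpace ℝ (Fin (2 * d)))) (Subtype.val '' Sig) < Real.sqrt (c / t)} := by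
          intro θ hθ
          simp only [Set.mem_setOf_eq] at hθ ⊢
          have hgpos : 0 < g θ := by
            rcases (hgnn θ).lt_or_eq with h' | h'
            · exact h'
            · exfalso
              rw [← h'] at hθ
              norm_num at hθ
              linarith
          have h1 : g θ ^ 2 < c / t := by
            rw [lt_div_iff₀ htpos]
            have := (lt_div_iff₀ (pow_pos hgpos 2)).1 hθ
            linarith [mul_comm t (g θ ^ 2)]
          exact (Real.lt_sqrt (hgnn θ)).2 h1
        have hsq : 0 < Real.sqrt (c / t) := Real.sqrt_pos.2 (div_pos hc htpos)
        have hle1 : Real.sqrt (c / t) ≤ 1 := by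
          rw [show (1:ℝ) = Real.sqrt 1 by simp]
          exact Real.sqrt_le_sqrt ((div_le_one htpos).2 ht.le)
        refine (measure_mono hsub).trans ((htube _ hsq hle1).trans (le_of_eq ?_))
        congr 1
        have h4 : Real.sqrt (c / t) ^ 4 = (c / t) ^ 2 := by
          rw [show 4 = 2 * 2 from rfl, pow_mul, Real.sq_sqrt hct]
        rw [h4]
        field_simp
      refine lt_of_le_of_lt (setLIntegral_mono
        (by exact (measurable_const.div ((measurable_id.pow_const 2))).ennreal_ofReal) hb) ?_
      have hInt : IntegrableOn (fun t : ℝ => c ^ 3 * t ^ (-2:ℝ)) (Set.Ioi c) :=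
        (integrableOn_Ioi_rpow_of_lt (by norm_num) hc).const_mul _
      have hcongr : ∀ t ∈ Set.Ioi c,
          ENNReal.ofReal (c ^ 3 / t ^ 2) = ENNReal.ofReal (c ^ 3 * t ^ (-2:ℝ)) := by
        intro t ht
        have htpos : 0 < t := hc.trans ht
        congr 1
        rw [show (-2:ℝ) = -((2:ℕ):ℝ) by norm_num, Real.rpow_neg htpos.le, Real.rpow_natCast,
          div_eq_mul_inv]
      rw [setLIntegral_congr_fun measurableSet_Ioi hcongr]
      exact hInt.setLIntegral_lt_top
    exact ENNReal.add_lt_top.2 ⟨hfin1, hfin2⟩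
  have part1 : Integrable hbar μS := by
    refine ⟨hbar_meas.aestronglyMeasurable, ?_⟩
    rw [hasFiniteIntegral_iff_ofReal (Filter.Eventually.of_forall hbar_nonneg)]
    refine lt_of_le_of_lt (lintegral_mono_ae ?_) hdom
    have hae : ∀ᵐ θ ∂μS, θ ∉ Sig := by
      rw [ae_iff]
      simpa using hSigNull
    filter_upwards [hae] with θ hθ
    exact ENNReal.ofReal_le_ofReal (hbound θ hθ)
  -- Part 2: polar coordinates computation
  set e := homeomorphUnitSphereProd (EuclideanSpace ℝ (Fin (2 * d))) with he
  have hemb : MeasurableEmbedding ((↑) : ({0}ᶜ : Set (EuclideanSpace ℝ (Fin (2 * d)))) → (EuclideanSpace ℝ (Fin (2 * d)))) :=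
    MeasurableEmbedding.subtype_coe (measurableSet_singleton 0).compl
  have hmp : MeasurePreserving e ((volume : Measure (EuclideanSpace ℝ (Fin (2 * d)))).comap (↑))
      (μS.prod (Measure.volumeIoiPow (2 * d - 1))) := by
    have := (volume : Measure (EuclideanSpace ℝ (Fin (2 * d)))).measurePreserving_homeomorphUnitSphereProd
    rwa [hdim] at this
  set I := ∫ θ, hbar θ ∂μS with hI
  have key : ∀ R : ℝ, 0 < R →
      ∫ x in ball (0:(EuclideanSpace ℝ (Fin (2 * d)))) R, h x = I * (R ^ (2 * d - 3) / ((2 * d : ℝ) - 3)) := by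
    intro R hR
    have hpre : e ⁻¹' ((Set.univ : Set (sphere (0:(EuclideanSpace ℝ (Fin (2 * d)))) 1)) ×ˢ Set.Iio (⟨R, hR⟩ : Set.Ioi (0:ℝ)))
        = ((↑) : ({0}ᶜ : Set (EuclideanSpace ℝ (Fin (2 * d)))) → (EuclideanSpace ℝ (Fin (2 * d)))) ⁻¹' (ball 0 R) := by
      ext x
      simp [he, Set.mem_prod, ← Subtype.coe_lt_coe, mem_ball, dist_zero_right]
    have hmp' := hmp.restrict_preimage
      ((MeasurableSet.univ.prod measurableSet_Iio) :
        MeasurableSet ((Set.univ : Set (sphere (0:(EuclideanSpace ℝ (Fin (2 * d)))) 1)) ×ˢ Set.Iio (⟨R, hR⟩ : Set.Ioi (0:ℝ))))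
    rw [hpre] at hmp'
    have hfe : ∀ x : ({0}ᶜ : Set (EuclideanSpace ℝ (Fin (2 * d)))),
        h (x : (EuclideanSpace ℝ (Fin (2 * d)))) = hbar (e x).1 * (((e x).2 : ℝ) ^ 3)⁻¹ := by
      intro x
      have hx : (x : (EuclideanSpace ℝ (Fin (2 * d)))) ≠ 0 := x.2
      have hn : 0 < ‖(x : (EuclideanSpace ℝ (Fin (2 * d))))‖ := norm_pos_iff.2 hx
      calc h (x : (EuclideanSpace ℝ (Fin (2 * d)))) = h (‖(x : (EuclideanSpace ℝ (Fin (2 * d))))‖ • ((e x).1 : (EuclideanSpace ℝ (Fin (2 * d))))) := by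
            rw [show ((e x).1 : (EuclideanSpace ℝ (Fin (2 * d)))) = ‖(x : (EuclideanSpace ℝ (Fin (2 * d))))‖⁻¹ • (x : (EuclideanSpace ℝ (Fin (2 * d)))) by simp [he, homeomorphUnitSphereProd], smul_inv_smul₀ hn.ne']
        _ = (‖(x : (EuclideanSpace ℝ (Fin (2 * d))))‖ ^ 3)⁻¹ * hbar (e x).1 := hhom _ hn _
        _ = hbar (e x).1 * (((e x).2 : ℝ) ^ 3)⁻¹ := by
            rw [show (((e x).2 : ℝ)) = ‖(x : (EuclideanSpace ℝ (Fin (2 * d))))‖ by simp [he, homeomorphUnitSphereProd], mul_comm]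
    have hball0 : ((volume : Measure (EuclideanSpace ℝ (Fin (2 * d)))).restrict (ball (0:(EuclideanSpace ℝ (Fin (2 * d)))) R)).restrict ({0}ᶜ)
        = (volume : Measure (EuclideanSpace ℝ (Fin (2 * d)))).restrict (ball 0 R) := by
      refine Measure.restrict_eq_self_of_ae_mem ?_
      rw [ae_iff]
      refine measure_mono_null (fun x hx => ?_)
        (le_antisymm ((Measure.restrict_apply_le _ _).trans
          (le_of_eq (measure_singleton 0))) (zero_le))
      simp only [Set.mem_setOf_eq, Set.mem_compl_iff, not_not] at hx
      exact hx
    calc ∫ x in ball (0:(EuclideanSpace ℝ (Fin (2 * d)))) R, h x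
        = ∫ x : ({0}ᶜ : Set (EuclideanSpace ℝ (Fin (2 * d)))), h x ∂(((volume : Measure (EuclideanSpace ℝ (Fin (2 * d)))).restrict (ball 0 R)).comap (↑)) := by
          rw [integral_subtype_comap (measurableSet_singleton (0:(EuclideanSpace ℝ (Fin (2 * d))))).compl, hball0]
      _ = ∫ x : ({0}ᶜ : Set (EuclideanSpace ℝ (Fin (2 * d)))),
            (fun p : sphere (0:(EuclideanSpace ℝ (Fin (2 * d)))) 1 × Set.Ioi (0:ℝ) => hbar p.1 * ((p.2 : ℝ) ^ 3)⁻¹) (e x)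
            ∂(((volume : Measure (EuclideanSpace ℝ (Fin (2 * d)))).comap (↑)).restrict (((↑) : ({0}ᶜ : Set (EuclideanSpace ℝ (Fin (2 * d)))) → (EuclideanSpace ℝ (Fin (2 * d)))) ⁻¹' (ball 0 R))) := by
          rw [← hemb.comap_restrict]
          exact integral_congr_ae (Filter.Eventually.of_forall fun x => hfe x)
      _ = ∫ p in (Set.univ : Set (sphere (0:(EuclideanSpace ℝ (Fin (2 * d)))) 1)) ×ˢ Set.Iio (⟨R, hR⟩ : Set.Ioi (0:ℝ)),
            hbar p.1 * ((p.2 : ℝ) ^ 3)⁻¹ ∂(μS.prod (Measure.volumeIoiPow (2 * d - 1))) :=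
          by exact hmp'.integral_comp e.measurableEmbedding
                (fun p : ↥(sphere (0:(EuclideanSpace ℝ (Fin (2 * d)))) 1) × ↥(Set.Ioi (0:ℝ)) =>
                  hbar p.1 * ((p.2 : ℝ) ^ 3)⁻¹)
      _ = I * ∫ r in Set.Iio (⟨R, hR⟩ : Set.Ioi (0:ℝ)), ((r : ℝ) ^ 3)⁻¹
            ∂(Measure.volumeIoiPow (2 * d - 1)) := by
          rw [← Measure.prod_restrict, Measure.restrict_univ]
          exact integral_prod_mul hbar (fun r : Set.Ioi (0:ℝ) => ((r : ℝ) ^ 3)⁻¹)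
      _ = I * (R ^ (2 * d - 3) / ((2 * d : ℝ) - 3)) := by
          congr 1
          have hIio : (Set.Iio (⟨R, hR⟩ : Set.Ioi (0:ℝ)))
              = (Subtype.val : Set.Ioi (0:ℝ) → ℝ) ⁻¹' (Set.Iio R) := by
            ext x
            simp [← Subtype.coe_lt_coe]
          rw [Measure.volumeIoiPow, restrict_withDensity measurableSet_Iio, hIio,
            ← (MeasurableEmbedding.subtype_coe measurableSet_Ioi).comap_restrict]
          simp only [ENNReal.ofReal]
          rw [integral_withDensity_eq_integral_smul
            ((measurable_subtype_coe.pow_const _).real_toNNReal)]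
          rw [integral_subtype_comap (μ := volume.restrict (Set.Iio R)) measurableSet_Ioi
            (fun x : ℝ => (x ^ (2 * d - 1)).toNNReal • (x ^ 3)⁻¹)]
          have : ∫ x in Set.Ioi (0:ℝ), (Real.toNNReal (x ^ (2 * d - 1))) • (x ^ 3)⁻¹
              ∂(volume.restrict (Set.Iio R))
              = ∫ x in Set.Ioo (0:ℝ) R, x ^ (2 * d - 4) := by
            rw [Measure.restrict_restrict measurableSet_Ioi, Set.Ioi_inter_Iio]
            refine setIntegral_congr_fun measurableSet_Ioo fun x hx => ?_
            rw [NNReal.smul_def, Real.coe_toNNReal _ (pow_nonneg hx.1.le _), smul_eq_mul,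
              ← pow_sub₀ _ hx.1.ne' (by omega : 3 ≤ 2 * d - 1),
              show 2 * d - 1 - 3 = 2 * d - 4 by omega]
          rw [this, Measure.restrict_congr_set Ioo_ae_eq_Ioc,
            ← intervalIntegral.integral_of_le hR.le, integral_pow]
          rw [show 2 * d - 4 + 1 = 2 * d - 3 by omega]
          rw [zero_pow (by omega), sub_zero]
          congr 1
          push_cast [Nat.cast_sub (by omega : 4 ≤ 2 * d)]
          ring
  refine ⟨part1, ?_⟩
  have hlim : ∀ᶠ R in atTop, (1 / ((2 * d : ℝ) - 3)) * I
      = R ^ (3 - (2 * d : ℝ)) * ∫ x in ball (0:(EuclideanSpace ℝ (Fin (2 * d)))) R, h x := by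
    filter_upwards [eventually_gt_atTop (0:ℝ)] with R hR
    rw [key R hR]
    have h1 : R ^ (3 - (2 * d : ℝ)) * R ^ (2 * d - 3) = 1 := by
      rw [← Real.rpow_natCast R (2 * d - 3), ← Real.rpow_add hR,
        show (3 - (2 * d : ℝ)) + ((2 * d - 3 : ℕ) : ℝ) = 0 by
          push_cast [Nat.cast_sub (by omega : 3 ≤ 2 * d)]
          ring]
      exact Real.rpow_zero R
    have h2 : R ^ (3 - (2 * d : ℝ)) * (I * (R ^ (2 * d - 3) / ((2 * d : ℝ) - 3)))
        = (R ^ (3 - (2 * d : ℝ)) * R ^ (2 * d - 3)) * I / ((2 * d : ℝ) - 3) := by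
      ring
    rw [h2, h1, one_mul, one_div, inv_mul_eq_div]
  exact Tendsto.congr' hlim tendsto_const_nhds
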